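/- Let γ > 1 and let α satisfy α > 0 or α < −γ. Fix p > 0, v ∈ ℝ, and ρ₋, ρ₊ > 0, and consider the pair of states (ρ₋, v, p), (ρ₊, v, p). For any F = (Fρ, Fρv, Fρe) ∈ ℝ³ with Fρv = v·Fρ + p and Fρe = (1/2)v²·Fρ + (γ/(γ−1))·p·v, the entropy conservation residual satisfies the identity ⟦w⟧·F − ⟦ψ⟧ = −(α/(γ−1)) · p^{1/(α+γ)} · ⟦ρ^{−γ/(α+γ)}⟧ · Fρ − (γ/(γ−1)) · p^{1/(α+γ)} · v · ⟦ρ^{α/(α+γ)}⟧, where ⟦ρ^s⟧ = ρ₊^s − ρ₋^s. -/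

import Mathlib

/-- First component of the entropy variables for Harten's entropy with
parameter `α` for the 1D compressible Euler equations (`γ` is the ratio of
specific heats). -/
noncomputable def hartenW1 (γ α ρ v p : ℝ) : ℝ :=
  ρ / p * (p / ρ ^ γ) ^ (1 / (α + γ)) * (-(α / (γ - 1)) * (p / ρ) - v ^ 2 / 2)

/-- Second component of the entropy variables for Harten's entropy. -/
noncomputable def hartenW2 (γ α ρ v p : ℝ) : ℝ :=
  ρ / p * (p / ρ ^ γ) ^ (1 / (α + γ)) * v

/-- Third component of the entropy variables for Harten's entropy. -/
noncomputable def hartenW3 (γ α ρ v p : ℝ) : ℝ :=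
  ρ / p * (p / ρ ^ γ) ^ (1 / (α + γ)) * (-1)

/-- Flux potential associated with Harten's entropy. -/
noncomputable def hartenPsi (γ α ρ v p : ℝ) : ℝ :=
  ρ * (p / ρ ^ γ) ^ (1 / (α + γ)) * v

/-- Entropy conservation residual `⟦w⟧ ⬝ F - ⟦ψ⟧` of a numerical flux
`(Fρ, Fρv, Fρe)` at the pair of states `(ρm, vm, pm)`, `(ρp, vp, pp)`. -/
noncomputable def ecResidual (γ α ρm vm pm ρp vp pp Fρ Fρv Fρe : ℝ) : ℝ :=
  (hartenW1 γ α ρp vp pp - hartenW1 γ α ρm vm pm) * Fρ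
    + (hartenW2 γ α ρp vp pp - hartenW2 γ α ρm vm pm) * Fρv
    + (hartenW3 γ α ρp vp pp - hartenW3 γ α ρm vm pm) * Fρe
    - (hartenPsi γ α ρp vp pp - hartenPsi γ α ρm vm pm)

/-- For a pair of states with common pressure `p` and velocity `v`, and any
flux of pressure-equilibrium-preserving form `Fρv = v Fρ + p`,
`Fρe = ½ v² Fρ + γ/(γ-1) p v`, the entropy conservation residual satisfies
`⟦w⟧ ⬝ F - ⟦ψ⟧ = -(α/(γ-1)) p^(1/(α+γ)) ⟦ρ^(-γ/(α+γ))⟧ Fρ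
  - (γ/(γ-1)) p^(1/(α+γ)) v ⟦ρ^(α/(α+γ))⟧`. -/
theorem ec_residual_constant_pressure_velocity
    (γ α p v ρm ρp Fρ Fρv Fρe : ℝ)
    (hγ : 1 < γ) (hα : 0 < α ∨ α < -γ)
    (hp : 0 < p) (hρm : 0 < ρm) (hρp : 0 < ρp)
    (hFρv : Fρv = v * Fρ + p)
    (hFρe : Fρe = 1 / 2 * v ^ 2 * Fρ + γ / (γ - 1) * p * v) :
    ecResidual γ α ρm v p ρp v p Fρ Fρv Fρe =
      -(α / (γ - 1)) * p ^ (1 / (α + γ)) *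
          (ρp ^ (-γ / (α + γ)) - ρm ^ (-γ / (α + γ))) * Fρ
        - γ / (γ - 1) * p ^ (1 / (α + γ)) * v *
          (ρp ^ (α / (α + γ)) - ρm ^ (α / (α + γ))) := by
  have hsum : α + γ ≠ 0 := by
    rcases hα with h | h
    · positivity
    · intro hc; linarith
  have hγ1 : γ - 1 ≠ 0 := by linarith
  have key : ∀ ρ : ℝ, 0 < ρ →
      (p / ρ ^ γ) ^ (1 / (α + γ)) = p ^ (1 / (α + γ)) * ρ ^ (-γ / (α + γ)) := by
    intro ρ hρ
    rw [Real.div_rpow hp.le (Real.rpow_nonneg hρ.le _), ← Real.rpow_mul hρ.le,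
      mul_one_div, neg_div, Real.rpow_neg hρ.le, div_eq_mul_inv]
  have keyY : ∀ ρ : ℝ, 0 < ρ → ρ ^ (α / (α + γ)) = ρ * ρ ^ (-γ / (α + γ)) := by
    intro ρ hρ
    rw [show ρ * ρ ^ (-γ / (α + γ)) = ρ ^ (1:ℝ) * ρ ^ (-γ / (α + γ)) by
        rw [Real.rpow_one], ← Real.rpow_add hρ]
    congr 1
    field_simp
    ring
  simp only [ecResidual, hartenW1, hartenW2, hartenW3, hartenPsi, hFρv, hFρe,
    key ρm hρm, key ρp hρp, keyY ρm hρm, keyY ρp hρp]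
  field_simp
  ring
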